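/- With ρ, w₀ as given by the Chevalley-type representation lemma, let L = 𝕃(K_S) where 𝕃 = {g ∈ G : ρ(g)w₀ = w₀}, and Γ_L = Γ ∩ L. Then the map θ : G/Γ_L → G/Γ × W defined by θ(gΓ_L) = (gΓ, ρ(g)w₀) is a proper map. -/

import Mathlib

/-!
Properness of the joint orbit map (Einsiedler–Mohammadi, Proposition 5.6).
With `ρ, w₀` as in the Chevalley-type representation lemma (so that the orbit
`ρ(Γ)w₀` is discrete and closed), `L = {g : ρ(g)w₀ = w₀}` and `Γ_L = Γ ∩ L`,
the map `ϑ : G/Γ_L → G/Γ × W`, `ϑ(gΓ_L) = (gΓ, ρ(g)w₀)` is proper: preimages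
of compact sets are compact.
-/

open MeasureTheory Topology Filter

theorem orbit_map_proper
    {G : Type*} [Group G] [TopologicalSpace G] [IsTopologicalGroup G]
    (k : Type*) [NontriviallyNormedField k]
    (n : ℕ) (ρ : G →* GL (Fin n) k) (w₀ : Fin n → k)
    (hρcont : Continuous fun g : G => ((ρ g : Matrix (Fin n) (Fin n) k)).mulVec w₀)
    (Γ : Subgroup G)
    -- the orbit `ρ(Γ)w₀` is discrete and closed:
    (horbclosed : IsClosed {v : Fin n → k | ∃ γ ∈ Γ,
      v = ((ρ γ : Matrix (Fin n) (Fin n) k)).mulVec w₀})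
    (horbdisc : DiscreteTopology {v : Fin n → k | ∃ γ ∈ Γ,
      v = ((ρ γ : Matrix (Fin n) (Fin n) k)).mulVec w₀})
    -- `L = {g : ρ(g)w₀ = w₀}` and `Γ_L = Γ ∩ L`:
    (L : Subgroup G)
    (hL : (L : Set G) = {g : G | ((ρ g : Matrix (Fin n) (Fin n) k)).mulVec w₀ = w₀})
    -- the map `ϑ(gΓ_L) = (gΓ, ρ(g)w₀)`:
    (ϑ : G ⧸ (Γ ⊓ L) → (G ⧸ Γ) × (Fin n → k))
    (hϑ : ∀ g : G, ϑ ((g : G ⧸ (Γ ⊓ L))) =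
      ((g : G ⧸ Γ), ((ρ g : Matrix (Fin n) (Fin n) k)).mulVec w₀)) :
    ∀ Kc : Set ((G ⧸ Γ) × (Fin n → k)), IsCompact Kc → IsCompact (ϑ ⁻¹' Kc) := by
  classical
  intro Kc hKc
  -- the orbit map
  set f : G → (Fin n → k) := fun g => ((ρ g : Matrix (Fin n) (Fin n) k)).mulVec w₀ with hfdef
  have hfcont : Continuous f := hρcont
  set O : Set (Fin n → k) := {v : Fin n → k | ∃ γ ∈ Γ, v = f γ} with hOdef
  have hOclosed : IsClosed O := horbclosed
  have hOdisc : DiscreteTopology O := horbdisc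
  have hfmul : ∀ a b : G, f (a * b) =
      ((ρ a : Matrix (Fin n) (Fin n) k)).mulVec (f b) := by
    intro a b
    simp only [hfdef, map_mul, Units.val_mul, Matrix.mulVec_mulVec]
  have hinvmul : ∀ h : G,
      ((ρ h⁻¹ : Matrix (Fin n) (Fin n) k) : Matrix (Fin n) (Fin n) k) *
        (ρ h : Matrix (Fin n) (Fin n) k) = 1 := by
    intro h
    rw [map_inv]
    exact Units.inv_mul _
  -- span of the range of `f`
  obtain ⟨s, hs_sub, hspan, hli⟩ := exists_linearIndependent k (Set.range f)
  have hsfin : s.Finite := hli.setFinite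
  haveI : Fintype s := hsfin.fintype
  set M : Submodule k (Fin n → k) := Submodule.span k s with hMdef
  have hrangeM : ∀ g : G, f g ∈ M := by
    intro g
    rw [hspan]
    exact Submodule.subset_span ⟨g, rfl⟩
  obtain ⟨Q, hQ⟩ := M.exists_isCompl
  set π : (Fin n → k) →ₗ[k] M := M.linearProjOfIsCompl Q hQ with hπdef
  -- `M` is closed
  have hMclosed : IsClosed (M : Set (Fin n → k)) := by
    have hc : Continuous (Q.subtype.comp (Submodule.linearProjOfIsCompl Q M hQ.symm)) :=
      LinearMap.continuous_on_pi _
    have hset : (M : Set (Fin n → k)) =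
        (Q.subtype.comp (Submodule.linearProjOfIsCompl Q M hQ.symm)) ⁻¹' {0} := by
      ext x
      simp only [Set.mem_preimage, LinearMap.comp_apply, Set.mem_singleton_iff,
        Submodule.coe_subtype, ZeroMemClass.coe_eq_zero, SetLike.mem_coe,
        Submodule.linearProjOfIsCompl_apply_eq_zero_iff hQ.symm]
      exact (Submodule.projectionOnto_apply_eq_zero_iff hQ.symm).symm
    rw [hset]
    exact isClosed_singleton.preimage hc
  -- a basis of `M` consisting of elements of `s ⊆ range f`
  have hranges : Set.range ((↑) : s → (Fin n → k)) = s := Subtype.range_coe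
  have heq : Submodule.span k (Set.range ((↑) : s → (Fin n → k))) = M := by
    rw [hranges]
  set b : Module.Basis s k M := (Module.Basis.span hli).map (LinearEquiv.ofEq _ _ heq) with hbdef
  have hbval : ∀ i : s, ((b i : M) : Fin n → k) = (i : Fin n → k) := by
    intro i
    rw [hbdef, Module.Basis.map_apply]
    have : ((LinearEquiv.ofEq _ _ heq) ((Module.Basis.span hli) i) : Fin n → k) =
        (((Module.Basis.span hli) i : Submodule.span k (Set.range ((↑) : s → (Fin n → k)))) :
          Fin n → k) := rfl
    rw [this, Module.Basis.span_apply]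
  -- coordinate functionals
  set c : s → ((Fin n → k) →ₗ[k] k) := fun i => (b.coord i).comp π with hcdef
  have hrecon : ∀ w ∈ M, (∑ i : s, c i w • (i : Fin n → k)) = w := by
    intro w hw
    have h1 : π w = ⟨w, hw⟩ := Submodule.linearProjOfIsCompl_apply_left hQ ⟨w, hw⟩
    have h2 := congrArg (M.subtype) (b.sum_repr ⟨w, hw⟩)
    rw [map_sum] at h2
    simp only [LinearMap.map_smul, Submodule.coe_subtype] at h2
    calc (∑ i : s, c i w • (i : Fin n → k))
        = ∑ i : s, b.repr ⟨w, hw⟩ i • ((b i : M) : Fin n → k) := by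
          refine Finset.sum_congr rfl fun i _ => ?_
          rw [hbval i, hcdef]
          simp only [LinearMap.comp_apply, h1, Module.Basis.coord_apply]
      _ = w := h2
  -- choices of group elements realizing the basis vectors
  have hgs : ∀ i : s, ∃ g : G, f g = (i : Fin n → k) := fun i => hs_sub i.2
  choose gsel hgsel using hgs
  -- the reconstruction map
  set Ψ : G × (Fin n → k) → (Fin n → k) :=
    fun x => ∑ i : s, (c i x.2) • f (x.1⁻¹ * gsel i) with hΨdef
  have hΨcont : Continuous Ψ := by
    refine continuous_finset_sum _ fun i _ => Continuous.fun_smul ?_ ?_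
    · exact (LinearMap.continuous_on_pi (c i)).comp continuous_snd
    · exact hfcont.comp ((continuous_fst.inv).mul continuous_const)
  have hΨM : ∀ (h : G) (w : Fin n → k), w ∈ M →
      Ψ (h, w) = ((ρ h⁻¹ : Matrix (Fin n) (Fin n) k)).mulVec w := by
    intro h w hw
    have h1 : ∀ i : s, f (h⁻¹ * gsel i) =
        ((ρ h⁻¹ : Matrix (Fin n) (Fin n) k)).mulVec (i : Fin n → k) := by
      intro i
      rw [hfmul, hgsel]
    calc Ψ (h, w) = ∑ i : s, c i w •
          ((ρ h⁻¹ : Matrix (Fin n) (Fin n) k)).mulVecLin (i : Fin n → k) := by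
          rw [hΨdef]
          exact Finset.sum_congr rfl fun i _ => by rw [h1 i, Matrix.mulVecLin_apply]
      _ = ((ρ h⁻¹ : Matrix (Fin n) (Fin n) k)).mulVecLin
            (∑ i : s, c i w • (i : Fin n → k)) := by
          rw [map_sum]
          exact Finset.sum_congr rfl fun i _ => (map_smul _ _ _).symm
      _ = ((ρ h⁻¹ : Matrix (Fin n) (Fin n) k)).mulVec w := by
          rw [hrecon w hw, Matrix.mulVecLin_apply]
  have hΨkey : ∀ h γ' : G, Ψ (h, f (h * γ')) = f γ' := by
    intro h γ'
    rw [hΨM h _ (hrangeM _), hfmul, Matrix.mulVec_mulVec, hinvmul, Matrix.one_mulVec]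
  -- now the compactness argument
  rw [isCompact_iff_ultrafilter_le_nhds]
  intro F hF
  have hKcF : Kc ∈ F.map ϑ := Filter.mem_map.2 (Filter.le_principal_iff.1 hF)
  obtain ⟨⟨y, v⟩, hyvKc, hyv⟩ :=
    hKc.ultrafilter_le_nhds (F.map ϑ) (Filter.le_principal_iff.2 hKcF)
  -- lift the ultrafilter to `G`
  haveI hcomap : (Filter.comap (QuotientGroup.mk : G → G ⧸ (Γ ⊓ L)) ↑F).NeBot := by
    refine Filter.comap_neBot fun t ht => ?_
    obtain ⟨x, hx⟩ := Filter.nonempty_of_mem ht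
    exact ⟨x.out, by rwa [QuotientGroup.out_eq' x]⟩
  obtain ⟨U, hUle⟩ :=
    Filter.exists_ultrafilter_le (Filter.comap (QuotientGroup.mk : G → G ⧸ (Γ ⊓ L)) ↑F)
  have hmapUF : (U.map (QuotientGroup.mk : G → G ⧸ (Γ ⊓ L)) : Filter (G ⧸ (Γ ⊓ L))) = ↑F := by
    refine F.unique ?_
    rw [Ultrafilter.coe_map]
    exact le_trans (Filter.map_mono hUle) Filter.map_comap_le
  set Θ : G → (G ⧸ Γ) × (Fin n → k) := fun g => ((g : G ⧸ Γ), f g) with hΘdef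
  have hΘmap : Filter.map Θ ↑U = Filter.map ϑ ↑F := by
    conv_rhs => rw [← hmapUF]
    rw [Ultrafilter.coe_map, Filter.map_map]
    refine congrArg (fun φ => Filter.map φ (↑U : Filter G)) ?_
    funext g
    rw [Function.comp_apply, hϑ g]
  have hΘtendsto : Filter.Tendsto Θ ↑U (𝓝 (y, v)) := by
    rw [Filter.Tendsto, hΘmap, ← Ultrafilter.coe_map]
    exact hyv
  have hqU : Filter.Tendsto (fun g : G => (g : G ⧸ Γ)) ↑U (𝓝 y) :=
    (continuous_fst.tendsto _).comp hΘtendsto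
  have hfUv : Filter.Tendsto f ↑U (𝓝 v) :=
    (continuous_snd.tendsto _).comp hΘtendsto
  set g₀ : G := y.out with hg₀def
  have hg₀y : ((g₀ : G ⧸ Γ)) = y := QuotientGroup.out_eq' y
  have hvM : v ∈ M :=
    hMclosed.mem_of_tendsto hfUv (Filter.Eventually.of_forall fun g => hrangeM g)
  set v₀ : Fin n → k := ((ρ g₀⁻¹ : Matrix (Fin n) (Fin n) k)).mulVec v with hv₀def
  have hΨg₀v : Ψ (g₀, v) = v₀ := hΨM g₀ v hvM
  -- the key filter lemma
  have hT : ∀ B ∈ 𝓝 v₀, ∀ V₀ ∈ 𝓝 g₀,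
      {g : G | ∃ h ∈ V₀, h⁻¹ * g ∈ Γ ∧ f (h⁻¹ * g) ∈ B} ∈ U := by
    intro B hB V₀ hV₀
    have hBΨ : B ∈ 𝓝 (Ψ (g₀, v)) := by rw [hΨg₀v]; exact hB
    have hcontΨ : Ψ ⁻¹' B ∈ 𝓝 (g₀, v) := hΨcont.continuousAt.preimage_mem_nhds hBΨ
    rw [nhds_prod_eq, Filter.mem_prod_iff] at hcontΨ
    obtain ⟨V₁, hV₁, B₁, hB₁, hVB⟩ := hcontΨ
    set V₂ := interior (V₀ ∩ V₁) with hV₂def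
    have hg₀V₂ : g₀ ∈ V₂ :=
      mem_interior_iff_mem_nhds.2 (Filter.inter_mem hV₀ hV₁)
    have hOpen : IsOpen ((QuotientGroup.mk : G → G ⧸ Γ) '' V₂) :=
      QuotientGroup.isOpenMap_coe V₂ isOpen_interior
    have hmemy : ((QuotientGroup.mk : G → G ⧸ Γ) '' V₂) ∈ 𝓝 y :=
      hOpen.mem_nhds ⟨g₀, hg₀V₂, hg₀y⟩
    have hU1 : (fun g : G => (g : G ⧸ Γ)) ⁻¹' ((QuotientGroup.mk : G → G ⧸ Γ) '' V₂) ∈ U :=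
      hqU hmemy
    have hU2 : f ⁻¹' B₁ ∈ U := hfUv hB₁
    have hU12 := (U : Filter G).inter_sets hU1 hU2
    refine (U : Filter G).sets_of_superset hU12 ?_
    rintro g ⟨hg1, hg2⟩
    obtain ⟨h, hhV₂, hhq⟩ := hg1
    have hγ : h⁻¹ * g ∈ Γ := QuotientGroup.eq.1 hhq
    refine ⟨h, (interior_subset hhV₂).1, hγ, ?_⟩
    have hpair : (h, f g) ∈ V₁ ×ˢ B₁ :=
      Set.mk_mem_prod (interior_subset hhV₂).2 hg2
    have hΨin : Ψ (h, f g) ∈ B := hVB hpair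
    have hg_eq : h * (h⁻¹ * g) = g := by group
    have hkey := hΨkey h (h⁻¹ * g)
    rw [hg_eq] at hkey
    rw [← hkey]
    exact hΨin
  -- `v₀` lies in the (closed) orbit
  have hv₀O : v₀ ∈ O := by
    have : v₀ ∈ closure O := by
      rw [mem_closure_iff_nhds]
      intro B hB
      have hTB := hT B hB Set.univ Filter.univ_mem
      obtain ⟨g, hg⟩ := Ultrafilter.nonempty_of_mem hTB
      obtain ⟨h, -, hγ, hfB⟩ := hg
      exact ⟨f (h⁻¹ * g), hfB, ⟨h⁻¹ * g, hγ, rfl⟩⟩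
    rwa [hOclosed.closure_eq] at this
  -- isolation of `v₀` in the orbit
  obtain ⟨Biso, hBiso_nhds, hBiso⟩ : ∃ B ∈ 𝓝 v₀, B ∩ O ⊆ {v₀} := by
    have hsing : IsOpen ({(⟨v₀, hv₀O⟩ : O)} : Set O) := isOpen_discrete _
    rw [isOpen_induced_iff] at hsing
    obtain ⟨t, ht_open, ht⟩ := hsing
    have hv₀t : v₀ ∈ t := by
      have : (⟨v₀, hv₀O⟩ : O) ∈ (Subtype.val ⁻¹' t : Set O) := by
        rw [ht]; exact rfl
      exact this
    refine ⟨t, ht_open.mem_nhds hv₀t, ?_⟩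
    intro x hx
    have hmem : (⟨x, hx.2⟩ : O) ∈ (Subtype.val ⁻¹' t : Set O) := hx.1
    rw [ht] at hmem
    exact Subtype.ext_iff.1 hmem
  obtain ⟨γ, hγΓ, hγv₀⟩ := hv₀O
  -- the limit point
  refine ⟨((g₀ * γ : G) : G ⧸ (Γ ⊓ L)), ?_, ?_⟩
  · -- `ϑ` of it lies in `Kc`
    rw [Set.mem_preimage, hϑ]
    have h1 : ((g₀ * γ : G) : G ⧸ Γ) = y := by
      rw [QuotientGroup.mk_mul_of_mem g₀ hγΓ, hg₀y]
    have h2 : f (g₀ * γ) = v := by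
      rw [hfmul, ← hγv₀, hv₀def, Matrix.mulVec_mulVec, map_inv, Units.mul_inv,
        Matrix.one_mulVec]
    have : ((g₀ * γ : G) : G ⧸ Γ) = y ∧ f (g₀ * γ) = v := ⟨h1, h2⟩
    rw [show (((g₀ * γ : G) : G ⧸ Γ), f (g₀ * γ)) = (y, v) from Prod.ext h1 h2]
    exact hyvKc
  · -- convergence
    rw [le_nhds_iff]
    intro S hS_mem hS_open
    rw [← hmapUF, Ultrafilter.coe_map, Filter.mem_map]
    have hNopen : IsOpen ((QuotientGroup.mk : G → G ⧸ (Γ ⊓ L)) ⁻¹' S) :=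
      hS_open.preimage QuotientGroup.continuous_mk
    have hV₀nhds : ((fun h : G => h * γ) ⁻¹'
        ((QuotientGroup.mk : G → G ⧸ (Γ ⊓ L)) ⁻¹' S)) ∈ 𝓝 g₀ := by
      refine (hNopen.preimage (continuous_mul_right γ)).mem_nhds ?_
      exact hS_mem
    have hTm := hT Biso hBiso_nhds _ hV₀nhds
    refine (U : Filter G).sets_of_superset hTm ?_
    rintro g ⟨h, hhV₀, hγ', hfB⟩
    -- `f (h⁻¹ g) = v₀ = f γ`
    have hfeq : f (h⁻¹ * g) = f γ := by
      have hiso : f (h⁻¹ * g) ∈ ({v₀} : Set (Fin n → k)) :=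
        hBiso ⟨hfB, ⟨h⁻¹ * g, hγ', rfl⟩⟩
      rw [Set.mem_singleton_iff] at hiso
      rw [hiso, hγv₀]
    -- `γ⁻¹ (h⁻¹ g) ∈ Γ ⊓ L`
    have hδΓ : γ⁻¹ * (h⁻¹ * g) ∈ Γ := mul_mem (inv_mem hγΓ) hγ'
    have hδL : γ⁻¹ * (h⁻¹ * g) ∈ L := by
      have : f (γ⁻¹ * (h⁻¹ * g)) = w₀ := by
        rw [hfmul, hfeq]
        show ((ρ γ⁻¹ : Matrix (Fin n) (Fin n) k)).mulVec
          (((ρ γ : Matrix (Fin n) (Fin n) k)).mulVec w₀) = w₀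
        rw [Matrix.mulVec_mulVec, hinvmul, Matrix.one_mulVec]
      rw [← SetLike.mem_coe, hL]
      exact this
    have hcoset : ((h * γ : G) : G ⧸ (Γ ⊓ L)) = ((g : G) : G ⧸ (Γ ⊓ L)) := by
      refine QuotientGroup.eq.2 ?_
      have hrw : (h * γ)⁻¹ * g = γ⁻¹ * (h⁻¹ * g) := by group
      rw [hrw]
      exact Subgroup.mem_inf.2 ⟨hδΓ, hδL⟩
    show g ∈ (QuotientGroup.mk : G → G ⧸ (Γ ⊓ L)) ⁻¹' S
    rw [Set.mem_preimage, ← hcoset]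
    exact hhV₀
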